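/- Let n ≥ 5 and let A = 2^{1/n}·M, where M is the real n×n matrix with M_{ii} = 1 for 1 ≤ i ≤ n−1, M_{in} = 1/2 for 1 ≤ i ≤ n, and all other entries 0. Then the set of nonzero integer vectors v ∈ ℤⁿ with ‖Av‖ = syst(A) consists exactly of the 2n vectors ±e₁, …, ±e_{n−1}, ±(2eₙ − (e₁ + ⋯ + e_{n−1})). -/

import Mathlib

/-- The Euclidean norm of a vector in `ℝⁿ`. -/
noncomputable def eNorm {n : ℕ} (x : Fin n → ℝ) : ℝ :=
  Real.sqrt (∑ i, (x i) ^ 2)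

/-- The Euclidean norm of `A v` for an integer vector `v`. -/
noncomputable def latNorm {n : ℕ} (A : Matrix (Fin n) (Fin n) ℝ) (v : Fin n → ℤ) : ℝ :=
  eNorm (A.mulVec (fun i => (v i : ℝ)))

/-- The systole of `A`: the infimum (in fact minimum) of `‖A v‖` over nonzero
integer vectors `v ∈ ℤⁿ`. -/
noncomputable def syst {n : ℕ} (A : Matrix (Fin n) (Fin n) ℝ) : ℝ :=
  sInf {r | ∃ v : Fin n → ℤ, v ≠ 0 ∧ r = latNorm A v}

/-- The matrix `M` with `M i i = 1` for `i` in the upper-left `(n-1) × (n-1)` block,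
last column constantly `1/2`, and all other entries `0`. -/
noncomputable def Mmat (n : ℕ) : Matrix (Fin n) (Fin n) ℝ :=
  Matrix.of fun i j => if (j : ℕ) = n - 1 then 1 / 2 else if i = j then 1 else 0

/-- The matrix `A = 2^(1/n) • M` (which has determinant `1`). -/
noncomputable def Amat (n : ℕ) : Matrix (Fin n) (Fin n) ℝ :=
  ((2 : ℝ) ^ ((1 : ℝ) / n)) • Mmat n

section Aux

variable {n : ℕ}

/-- the last index -/
def lastI (hn : 5 ≤ n) : Fin n := ⟨n - 1, by omega⟩

lemma val_eq_last_iff (hn : 5 ≤ n) (j : Fin n) : (j : ℕ) = n - 1 ↔ j = lastI hn := by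
  constructor
  · intro h; exact Fin.ext h
  · intro h; subst h; rfl

/-- the integer quadratic form: 4 ‖M v‖² -/
def gq (hn : 5 ≤ n) (v : Fin n → ℤ) : ℤ :=
  ∑ i : Fin n, (if i = lastI hn then (v i)^2 else (2 * v i + v (lastI hn))^2)

lemma gq_nonneg_terms (hn : 5 ≤ n) (v : Fin n → ℤ) :
    ∀ i ∈ Finset.univ, (0:ℤ) ≤ (if i = lastI hn then (v i)^2 else (2 * v i + v (lastI hn))^2) := by
  intro i _
  split <;> positivity

lemma mulVec_M (hn : 5 ≤ n) (x : Fin n → ℝ) (i : Fin n) :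
    (Mmat n).mulVec x i = (if i = lastI hn then 0 else x i) + x (lastI hn) / 2 := by
  unfold Mmat Matrix.mulVec
  simp only [Matrix.of_apply, dotProduct]
  have key : ∀ j : Fin n,
      (if (j : ℕ) = n - 1 then (1:ℝ) / 2 else if i = j then 1 else 0) * x j
      = (if j = lastI hn then x j / 2 else 0)
        + (if j = i then (if j = lastI hn then 0 else x j) else 0) := by
    intro j
    by_cases hj : j = lastI hn
    · subst hj
      have hj' : ((lastI hn : Fin n) : ℕ) = n - 1 := rfl
      by_cases hi : lastI hn = i
      · subst hi; simp [hj']; ring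
      · simp [hj', hi, Ne.symm hi]; ring
    · have hj' : ¬ ((j : ℕ) = n - 1) := fun h => hj (Fin.ext h)
      by_cases hi : j = i
      · subst hi; simp [hj, hj']
      · simp [hj, hj', hi, Ne.symm hi]
  rw [Finset.sum_congr rfl (fun j _ => key j)]
  rw [Finset.sum_add_distrib, Finset.sum_ite_eq', Finset.sum_ite_eq']
  simp only [Finset.mem_univ, if_true]
  by_cases hi : i = lastI hn
  · subst hi; simp
  · simp [hi]; ring

lemma latNorm_eq (hn : 5 ≤ n) (v : Fin n → ℤ) :
    latNorm (Amat n) v = (2 : ℝ) ^ ((1 : ℝ) / n) * (Real.sqrt ((gq hn v : ℝ)) / 2) := by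
  set c : ℝ := (2 : ℝ) ^ ((1 : ℝ) / n) with hc
  have hcpos : 0 < c := Real.rpow_pos_of_pos (by norm_num) _
  unfold latNorm eNorm Amat
  have hmul : ∀ i, ((c • Mmat n).mulVec (fun i => (v i : ℝ))) i
      = c * ((Mmat n).mulVec (fun i => (v i : ℝ)) i) := by
    intro i
    simp [Matrix.smul_mulVec]
  have hsum : (∑ i, ((c • Mmat n).mulVec (fun i => (v i : ℝ)) i) ^ 2)
      = c^2 * ((gq hn v : ℝ) / 4) := by
    have : ∀ i : Fin n, ((Mmat n).mulVec (fun i => (v i : ℝ)) i)^2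
        = (if i = lastI hn then ((v i : ℝ))^2 else (2 * (v i : ℝ) + (v (lastI hn) : ℝ))^2) / 4 := by
      intro i
      rw [mulVec_M hn]
      by_cases hi : i = lastI hn
      · subst hi; simp; ring
      · simp [hi]; ring
    rw [Finset.sum_congr rfl (fun i _ => by rw [hmul i, mul_pow, this i])]
    rw [← Finset.mul_sum]
    unfold gq
    push_cast
    rw [← Finset.sum_div]
  have hg : (0:ℝ) ≤ (gq hn v : ℝ) := by
    exact_mod_cast Finset.sum_nonneg (gq_nonneg_terms hn v)
  rw [hsum, Real.sqrt_mul (by positivity) _, Real.sqrt_sq hcpos.le,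
    Real.sqrt_div hg, show Real.sqrt 4 = 2 from by
      rw [show (4:ℝ) = 2^2 by norm_num, Real.sqrt_sq (by norm_num)]]

lemma one_le_sq_of_ne {x : ℤ} (h : x ≠ 0) : 1 ≤ x ^ 2 := by
  rcases h.lt_or_gt with h | h <;> nlinarith

lemma gq_ge_four (hn : 5 ≤ n) (v : Fin n → ℤ) (hv : v ≠ 0) : 4 ≤ gq hn v := by
  set L := lastI hn with hL
  rcases Int.even_or_odd (v L) with ⟨k, hk⟩ | ⟨k, hk⟩
  · by_cases hk0 : k = 0
    · -- v L = 0
      obtain ⟨i, hi⟩ : ∃ i, v i ≠ 0 := by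
        by_contra h'; push_neg at h'; exact hv (funext h')
      have hiL : i ≠ L := by intro h; rw [h, hk, hk0] at hi; simp at hi
      have hvL : v L = 0 := by omega
      have hthis : (2 * v i + v L)^2 ≤ gq hn v := by
        have := Finset.single_le_sum (gq_nonneg_terms hn v) (Finset.mem_univ i)
        simpa [gq, hiL, ← hL] using this
      rw [hvL] at hthis
      have h1 : 1 ≤ (v i)^2 := one_le_sq_of_ne hi
      nlinarith
    · -- v L even nonzero
      have hthis : (v L)^2 ≤ gq hn v := by
        have := Finset.single_le_sum (gq_nonneg_terms hn v) (Finset.mem_univ L)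
        simpa [gq, ← hL] using this
      rw [hk] at hthis
      nlinarith [one_le_sq_of_ne hk0]
  · -- v L odd : every term is at least 1, so gq ≥ n ≥ 5
    have hterm : ∀ i ∈ Finset.univ,
        (1:ℤ) ≤ (if i = L then (v i)^2 else (2 * v i + v L)^2) := by
      intro i _
      split
      · next hi => subst hi; exact one_le_sq_of_ne (by omega)
      · exact one_le_sq_of_ne (by omega)
    have hsum : (n:ℤ) ≤ gq hn v := by
      have := Finset.sum_le_sum hterm
      simpa [gq] using this
    omega

lemma gq_eq_four (hn : 5 ≤ n) (v : Fin n → ℤ) (hv : v ≠ 0) (h : gq hn v = 4) :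
    (∃ i : Fin n, (i : ℕ) < n - 1 ∧
      (v = (fun j : Fin n => if j = i then 1 else 0) ∨
       v = (fun j : Fin n => if j = i then -1 else 0))) ∨
    v = (fun j : Fin n => if (j : ℕ) = n - 1 then 2 else -1) ∨
    v = (fun j : Fin n => if (j : ℕ) = n - 1 then -2 else 1) := by
  set L := lastI hn with hL
  have hLval : (L : ℕ) = n - 1 := rfl
  rcases Int.even_or_odd (v L) with ⟨k, hk⟩ | ⟨k, hk⟩
  swap
  · -- odd: impossible
    exfalso
    have hterm : ∀ i ∈ Finset.univ,
        (1:ℤ) ≤ (if i = L then (v i)^2 else (2 * v i + v L)^2) := by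
      intro i _
      split
      · next hi => subst hi; exact one_le_sq_of_ne (by omega)
      · exact one_le_sq_of_ne (by omega)
    have hsum : (n:ℤ) ≤ gq hn v := by
      have := Finset.sum_le_sum hterm
      simpa [gq] using this
    omega
  · by_cases hk0 : k = 0
    · -- v L = 0 : standard basis vector case
      left
      have hvL : v L = 0 := by omega
      obtain ⟨i, hi⟩ : ∃ i, v i ≠ 0 := by
        by_contra h'; push_neg at h'; exact hv (funext h')
      have hiL : i ≠ L := fun h' => hi (h' ▸ hvL)
      have hsplit : (if i = L then (v i)^2 else (2 * v i + v L)^2)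
          + ∑ j ∈ Finset.univ.erase i,
            (if j = L then (v j)^2 else (2 * v j + v L)^2) = 4 := by
        rw [Finset.add_sum_erase Finset.univ
          (fun j => if j = L then (v j)^2 else (2 * v j + v L)^2) (Finset.mem_univ i)]
        exact h
      have hrest_nonneg : (0:ℤ) ≤ ∑ j ∈ Finset.univ.erase i,
          (if j = L then (v j)^2 else (2 * v j + v L)^2) :=
        Finset.sum_nonneg (fun j hj => gq_nonneg_terms hn v j (Finset.mem_univ j))
      have hexp : (2 * v i + v L)^2 = 4 * (v i)^2 := by rw [hvL]; ring
      have htermi : (2 * v i + v L)^2 ≥ 4 := by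
        have h1 : 1 ≤ (v i)^2 := one_le_sq_of_ne hi
        rw [hexp]; linarith
      have hresti : (if i = L then (v i)^2 else (2 * v i + v L)^2) = (2 * v i + v L)^2 := by
        simp [hiL]
      have hrest0 : ∑ j ∈ Finset.univ.erase i,
          (if j = L then (v j)^2 else (2 * v j + v L)^2) = 0 := by
        rw [hresti] at hsplit; omega
      have hzero : ∀ j, j ≠ i → v j = 0 := by
        intro j hj
        have := (Finset.sum_eq_zero_iff_of_nonneg
          (fun j hj => gq_nonneg_terms hn v j (Finset.mem_univ j))).mp hrest0 j
          (Finset.mem_erase.mpr ⟨hj, Finset.mem_univ j⟩)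
        by_cases hjL : j = L
        · subst hjL; exact hvL
        · simp only [← hL, hjL, if_false] at this
          have : 2 * v j + v L = 0 := by
            exact pow_eq_zero_iff (n := 2) (by norm_num) |>.mp this
          omega
      have hvi : (v i)^2 = 1 := by
        rw [hresti] at hsplit
        have ht4 : (2 * v i + v L)^2 = 4 := by linarith
        rw [hexp] at ht4
        linarith
      have hvi' : v i = 1 ∨ v i = -1 := by
        have : (v i - 1) * (v i + 1) = 0 := by nlinarith
        rcases mul_eq_zero.mp this with h' | h'
        · left; omega
        · right; omega
      refine ⟨i, ?_, ?_⟩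
      · have : (i : ℕ) ≠ n - 1 := fun h' => hiL (Fin.ext h')
        omega
      · rcases hvi' with h' | h'
        · left; funext j; by_cases hj : j = i
          · subst hj; simp [h']
          · simp [hj, hzero j hj]
        · right; funext j; by_cases hj : j = i
          · subst hj; simp [h']
          · simp [hj, hzero j hj]
    · -- v L = 2k, k ≠ 0
      right
      have htL : (v L)^2 ≤ 4 := by
        have := Finset.single_le_sum (gq_nonneg_terms hn v) (Finset.mem_univ L)
        simp only [← hL, if_pos rfl] at this
        rw [show (∑ i : Fin n, if i = L then (v i)^2 else (2 * v i + v L)^2) = gq hn v from rfl,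
          h] at this
        exact this
      rw [hk] at htL
      have hk1 : k = 1 ∨ k = -1 := by
        have : k^2 ≤ 1 := by nlinarith
        have h1 : 1 ≤ k^2 := one_le_sq_of_ne hk0
        have : (k - 1) * (k + 1) = 0 := by nlinarith
        rcases mul_eq_zero.mp this with h' | h'
        · left; omega
        · right; omega
      have hvL2 : (v L)^2 = 4 := by rcases hk1 with h' | h' <;> subst h' <;> rw [hk] <;> ring
      have hsplit : (if L = L then (v L)^2 else (2 * v L + v L)^2)
          + ∑ j ∈ Finset.univ.erase L,
            (if j = L then (v j)^2 else (2 * v j + v L)^2) = 4 := by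
        rw [Finset.add_sum_erase Finset.univ
          (fun j => if j = L then (v j)^2 else (2 * v j + v L)^2) (Finset.mem_univ L)]
        exact h
      rw [if_pos rfl, hvL2] at hsplit
      have hrest0 : ∑ j ∈ Finset.univ.erase L,
          (if j = L then (v j)^2 else (2 * v j + v L)^2) = 0 := by omega
      have hzero : ∀ j, j ≠ L → v j = -k := by
        intro j hj
        have := (Finset.sum_eq_zero_iff_of_nonneg
          (fun j hj => gq_nonneg_terms hn v j (Finset.mem_univ j))).mp hrest0 j
          (Finset.mem_erase.mpr ⟨hj, Finset.mem_univ j⟩)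
        simp only [← hL, hj, if_false] at this
        have : 2 * v j + v L = 0 := pow_eq_zero_iff (n := 2) (by norm_num) |>.mp this
        omega
      rcases hk1 with h' | h'
      · left; funext j
        by_cases hj : j = L
        · subst hj; simp [hLval, hk, h']
        · have hj' : (j : ℕ) ≠ n - 1 := fun h'' => hj (Fin.ext h'')
          simp [hj', hzero j hj, h']
      · right; funext j
        by_cases hj : j = L
        · subst hj; simp [hLval, hk, h']
        · have hj' : (j : ℕ) ≠ n - 1 := fun h'' => hj (Fin.ext h'')
          simp [hj', hzero j hj, h']

lemma gq_delta (hn : 5 ≤ n) (i : Fin n) (hi : (i : ℕ) < n - 1) (ε : ℤ) (hε : ε = 1 ∨ ε = -1) :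
    gq hn (fun j => if j = i then ε else 0) = 4 := by
  have hiL : i ≠ lastI hn := by
    intro h'; rw [h'] at hi; simp only [lastI] at hi; omega
  have hε2 : ε^2 = 1 := by rcases hε with h | h <;> subst h <;> ring
  unfold gq
  have key : ∀ j : Fin n,
      (if j = lastI hn then ((if j = i then ε else 0):ℤ)^2
        else (2 * (if j = i then ε else 0) + (if lastI hn = i then ε else 0))^2)
      = if j = i then 4 else 0 := by
    intro j
    have hLi : ¬ (lastI hn = i) := fun h' => hiL h'.symm
    by_cases hj : j = lastI hn
    · subst hj
      simp [hLi, Ne.symm hiL]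
    · by_cases hji : j = i
      · subst hji; simp [hj, hLi]; nlinarith
      · simp [hj, hji, hLi]
  rw [Finset.sum_congr rfl (fun j _ => key j), Finset.sum_ite_eq']
  simp

lemma gq_w1 (hn : 5 ≤ n) :
    gq hn (fun j => if (j : ℕ) = n - 1 then 2 else -1) = 4 := by
  unfold gq
  have hLval : ((lastI hn : Fin n) : ℕ) = n - 1 := rfl
  have key : ∀ j : Fin n,
      (if j = lastI hn then ((if (j:ℕ) = n - 1 then 2 else (-1:ℤ)))^2
        else (2 * (if (j:ℕ) = n - 1 then 2 else -1) + (if ((lastI hn : Fin n):ℕ) = n - 1 then 2 else -1))^2)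
      = if j = lastI hn then 4 else 0 := by
    intro j
    by_cases hj : j = lastI hn
    · subst hj; simp [hLval]
    · have hj' : (j : ℕ) ≠ n - 1 := fun h' => hj (Fin.ext h')
      simp [hj, hj', hLval]
  rw [Finset.sum_congr rfl (fun j _ => key j), Finset.sum_ite_eq']
  simp

lemma gq_w2 (hn : 5 ≤ n) :
    gq hn (fun j => if (j : ℕ) = n - 1 then -2 else 1) = 4 := by
  unfold gq
  have hLval : ((lastI hn : Fin n) : ℕ) = n - 1 := rfl
  have key : ∀ j : Fin n,
      (if j = lastI hn then ((if (j:ℕ) = n - 1 then -2 else (1:ℤ)))^2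
        else (2 * (if (j:ℕ) = n - 1 then -2 else 1) + (if ((lastI hn : Fin n):ℕ) = n - 1 then -2 else 1))^2)
      = if j = lastI hn then 4 else 0 := by
    intro j
    by_cases hj : j = lastI hn
    · subst hj; simp [hLval]
    · have hj' : (j : ℕ) ≠ n - 1 := fun h' => hj (Fin.ext h')
      simp [hj, hj', hLval]
  rw [Finset.sum_congr rfl (fun j _ => key j), Finset.sum_ite_eq']
  simp

lemma latNorm_of_gq_four (hn : 5 ≤ n) (v : Fin n → ℤ) (h : gq hn v = 4) :
    latNorm (Amat n) v = (2 : ℝ) ^ ((1 : ℝ) / n) := by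
  rw [latNorm_eq hn, h]
  rw [show ((4:ℤ):ℝ) = 2^2 by norm_num, Real.sqrt_sq (by norm_num)]
  ring

lemma syst_Amat (hn : 5 ≤ n) : syst (Amat n) = (2 : ℝ) ^ ((1 : ℝ) / n) := by
  set c : ℝ := (2 : ℝ) ^ ((1 : ℝ) / n) with hc
  have hcpos : 0 < c := Real.rpow_pos_of_pos (by norm_num) _
  have hlow : ∀ r ∈ {r | ∃ v : Fin n → ℤ, v ≠ 0 ∧ r = latNorm (Amat n) v}, c ≤ r := by
    rintro r ⟨v, hv, rfl⟩
    rw [latNorm_eq hn]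
    have hg : 4 ≤ gq hn v := gq_ge_four hn v hv
    have h2 : (2:ℝ) ≤ Real.sqrt ((gq hn v : ℝ)) := by
      rw [show (2:ℝ) = Real.sqrt 4 from by
        rw [show (4:ℝ) = 2^2 by norm_num, Real.sqrt_sq (by norm_num)]]
      apply Real.sqrt_le_sqrt
      exact_mod_cast hg
    nlinarith
  have hδ : (0 : ℕ) < n - 1 := by omega
  set v0 : Fin n → ℤ := fun j => if j = (⟨0, by omega⟩ : Fin n) then 1 else 0 with hv0
  have hv0ne : v0 ≠ 0 := by
    intro h'
    have := congrFun h' (⟨0, by omega⟩ : Fin n)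
    simp [hv0] at this
  have hmem : c ∈ {r | ∃ v : Fin n → ℤ, v ≠ 0 ∧ r = latNorm (Amat n) v} := by
    refine ⟨v0, hv0ne, ?_⟩
    rw [latNorm_of_gq_four hn v0 (gq_delta hn _ hδ 1 (Or.inl rfl))]
  unfold syst
  apply le_antisymm
  · exact csInf_le ⟨c, hlow⟩ hmem
  · exact le_csInf ⟨c, hmem⟩ hlow

lemma latNorm_eq_syst_iff (hn : 5 ≤ n) (v : Fin n → ℤ) :
    latNorm (Amat n) v = syst (Amat n) ↔ gq hn v = 4 := by
  rw [syst_Amat hn, latNorm_eq hn]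
  set c : ℝ := (2 : ℝ) ^ ((1 : ℝ) / n) with hc
  have hcpos : 0 < c := Real.rpow_pos_of_pos (by norm_num) _
  have hg : (0:ℝ) ≤ (gq hn v : ℝ) := by
    exact_mod_cast Finset.sum_nonneg (gq_nonneg_terms hn v)
  constructor
  · intro h
    have h2 : Real.sqrt ((gq hn v : ℝ)) = 2 := by
      have := mul_left_cancel₀ hcpos.ne' (h.trans (mul_one c).symm)
      linarith
    have : ((gq hn v : ℝ)) = 4 := by
      have := Real.sq_sqrt hg
      rw [h2] at this; nlinarith
    exact_mod_cast this
  · intro h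
    rw [h, show ((4:ℤ):ℝ) = 2^2 by norm_num, Real.sqrt_sq (by norm_num)]
    ring

end Aux

/-- For `n ≥ 5` and `A = 2^(1/n) • M`, the shortest nonzero integer vectors of `A` are
exactly the `2n` vectors `±e₁, …, ±e_{n-1}, ±(2eₙ − (e₁ + ⋯ + e_{n-1}))`. -/
theorem systole_set_Amat {n : ℕ} (hn : 5 ≤ n) :
    {v : Fin n → ℤ | v ≠ 0 ∧ latNorm (Amat n) v = syst (Amat n)} =
      {v : Fin n → ℤ |
        (∃ i : Fin n, (i : ℕ) < n - 1 ∧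
          (v = (fun j : Fin n => if j = i then 1 else 0) ∨
           v = (fun j : Fin n => if j = i then -1 else 0))) ∨
        v = (fun j : Fin n => if (j : ℕ) = n - 1 then 2 else -1) ∨
        v = (fun j : Fin n => if (j : ℕ) = n - 1 then -2 else 1)} := by
  ext v
  simp only [Set.mem_setOf_eq]
  constructor
  · rintro ⟨hv, heq⟩
    exact gq_eq_four hn v hv ((latNorm_eq_syst_iff hn v).mp heq)
  · intro hmem
    have key : v ≠ 0 ∧ gq hn v = 4 := by
      rcases hmem with ⟨i, hi, h' | h'⟩ | h' | h'
      · subst h'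
        refine ⟨?_, gq_delta hn i hi 1 (Or.inl rfl)⟩
        intro h0; have := congrFun h0 i; simp at this
      · subst h'
        refine ⟨?_, gq_delta hn i hi (-1) (Or.inr rfl)⟩
        intro h0; have := congrFun h0 i; simp at this
      · subst h'
        refine ⟨?_, gq_w1 hn⟩
        intro h0; have := congrFun h0 (lastI hn)
        simp [show ((lastI hn : Fin n):ℕ) = n - 1 from rfl] at this
      · subst h'
        refine ⟨?_, gq_w2 hn⟩
        intro h0; have := congrFun h0 (lastI hn)
        simp [show ((lastI hn : Fin n):ℕ) = n - 1 from rfl] at this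
    exact ⟨key.1, (latNorm_eq_syst_iff hn v).mpr key.2⟩
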